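/- Let S be a commutative local Noetherian ring which is 2-adically complete, Henselian, and whose residue field is separably closed (i.e. S is strictly Henselian). Let n be a natural number, let M be a free S-module of rank 2n, and let b be a perfect, symmetric bilinear form on M whose reduction modulo 2 is alternating (i.e. b(x,x) ∈ 2S for all x ∈ M). Then there exists an S-basis e₁, f₁, …, eₙ, fₙ of M such that b(eᵢ,fᵢ) = b(fᵢ,eᵢ) = 1 for all i, b(eᵢ,eⱼ) = 0 and b(fᵢ,fⱼ) = 0 for all i, j, and b(eᵢ,fⱼ) = 0 whenever i ≠ j; in other words, the Gram matrix of b with respect to this basis is J(2n), the block-diagonal matrix with n diagonal blocks ((0,1),(1,0)). -/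

import Mathlib

open IsLocalRing Polynomial

section helpers
variable {S : Type*} [CommRing S] [IsLocalRing S]

lemma unit_one_add {x : S} (h : x ∈ maximalIdeal S) : IsUnit (1 + x) := by
  by_contra h'
  have hm : (1 + x) ∈ maximalIdeal S := by
    simpa [IsLocalRing.mem_maximalIdeal, mem_nonunits_iff] using h'
  have h1 : (1 : S) ∈ maximalIdeal S := by
    have := Submodule.sub_mem _ hm h
    simpa using this
  exact (IsLocalRing.maximalIdeal.isMaximal S).ne_top ((Ideal.eq_top_iff_one _).mpr h1)

lemma two_mem_max (S : Type*) [CommRing S] [IsLocalRing S]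
    [IsAdicComplete (Ideal.span {(2 : S)}) S] [Nontrivial S] :
    (2 : S) ∈ maximalIdeal S := by
  by_contra h
  have hu : IsUnit (2 : S) := by
    simpa [IsLocalRing.mem_maximalIdeal, mem_nonunits_iff, not_not] using h
  have htop : Ideal.span {(2 : S)} = ⊤ := Ideal.span_singleton_eq_top.mpr hu
  have hh := IsAdicComplete.toIsHausdorff (I := Ideal.span {(2 : S)}) (M := S)
  have h10 : (1 : S) = 0 := by
    refine hh.haus 1 fun n => ?_
    rw [htop]
    have ht : ((⊤ : Ideal S) ^ n • ⊤ : Submodule S S) = ⊤ := by rw [Ideal.top_pow]; simp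
    rw [ht]
    exact SModEq.top
  exact one_ne_zero h10

lemma exists_AS_root [HenselianLocalRing S] [IsSepClosed (IsLocalRing.ResidueField S)]
    (h2 : (2 : S) ∈ maximalIdeal S) (c : S) :
    ∃ r : S, r * r + r + c = 0 ∧ IsUnit (r + 1) := by
  set k := ResidueField S
  have h2k : (2 : k) = 0 := by
    have : residue S 2 = 0 := Ideal.Quotient.eq_zero_iff_mem.mpr h2
    rwa [map_ofNat] at this
  set p : k[X] := X ^ 2 + X + C (residue S c) with hp
  have hdeg : p.degree = 2 := by
    have h1 : (X + C (residue S c)).degree ≤ 1 := by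
      apply le_trans (degree_add_le _ _)
      simp only [degree_X, sup_le_iff, le_refl, true_and]
      exact le_trans degree_C_le (by norm_num)
    rw [hp, add_assoc]
    rw [degree_add_eq_left_of_degree_lt]
    · exact degree_X_pow 2
    · rw [degree_X_pow]; exact lt_of_le_of_lt h1 (by norm_num)
  have hder : p.derivative = 1 := by
    simp [hp, derivative_X_pow, one_add_one_eq_two, h2k]
  have hsep : p.Separable := by
    rw [Polynomial.Separable, hder]; exact isCoprime_one_right
  obtain ⟨a₀, ha₀⟩ := IsSepClosed.exists_root p (by rw [hdeg]; norm_num) hsep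
  obtain ⟨A, hA⟩ := IsLocalRing.residue_surjective (R := S) a₀
  set f : S[X] := X ^ 2 + X + C c with hf
  have hmon : f.Monic := by
    rw [hf, add_assoc]
    apply monic_X_pow_add
    apply lt_of_le_of_lt (degree_add_le _ _)
    rw [sup_lt_iff]
    constructor
    · rw [degree_X]; norm_num
    · exact lt_of_le_of_lt degree_C_le (by norm_num)
  have heval : f.eval A ∈ maximalIdeal S := by
    rw [← Ideal.Quotient.eq_zero_iff_mem]
    show residue S (f.eval A) = 0
    have hevA : f.eval A = A ^ 2 + A + c := by simp [hf]
    rw [hevA, map_add, map_add, map_pow, hA]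
    have := ha₀
    simp only [IsRoot, hp, eval_add, eval_pow, eval_X, eval_C] at this
    exact this
  have hderu : IsUnit (f.derivative.eval A) := by
    have : f.derivative.eval A = 1 + 2 * A := by
      simp [hf, derivative_X_pow]; ring
    rw [this]
    exact unit_one_add (Ideal.mul_mem_right _ _ h2)
  obtain ⟨r, hr, -⟩ := HenselianLocalRing.is_henselian f hmon A heval hderu
  have hroot : r * r + r + c = 0 := by
    have := hr
    simp only [hf, IsRoot, eval_add, eval_pow, eval_X, eval_C] at this
    linear_combination this
  by_cases hu : IsUnit (r + 1)
  · exact ⟨r, hroot, hu⟩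
  · have hm : r + 1 ∈ maximalIdeal S := by
      simpa [IsLocalRing.mem_maximalIdeal, mem_nonunits_iff] using hu
    refine ⟨-1 - r, by linear_combination hroot, ?_⟩
    have he : (-1 - r) + 1 = 1 + (-(r + 1)) := by ring
    rw [he]
    exact unit_one_add (Submodule.neg_mem _ hm)

end helpers

lemma aux_sympl (S : Type u) [CommRing S] [IsLocalRing S] [IsNoetherianRing S]
    [HenselianLocalRing S] [IsSepClosed (IsLocalRing.ResidueField S)] [Nontrivial S]
    (h2 : (2 : S) ∈ maximalIdeal S) (n : ℕ) :
    ∀ (M : Type v) [AddCommGroup M] [Module S M] (_ : Module.Basis (Fin (2 * n)) S M)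
      (b : LinearMap.BilinForm S M)
      (_ : Function.Bijective ⇑b.flip)
      (_ : ∀ u v : M, b u v = b v u)
      (_ : ∀ x : M, ∃ s : S, b x x = 2 * s),
      ∃ B : Module.Basis (Fin n × Fin 2) S M,
        ∀ i j : Fin n × Fin 2,
          b (B i) (B j) = if i.1 = j.1 ∧ i.2 ≠ j.2 then 1 else 0 := by
  induction n with
  | zero =>
    intro M _ _ bM b hperf hsymm halt2
    refine ⟨bM.reindex ((finCongr (by norm_num) : Fin (2 * 0) ≃ Fin 0).trans
      (Equiv.equivOfIsEmpty (Fin 0) _)), fun i _ => i.1.elim0⟩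
  | succ k ih =>
    intro M _ _ bM b hperf hsymm halt2
    -- step 1 : hyperbolic pair
    obtain ⟨e, f, hee, hff, hef⟩ :
        ∃ e f : M, b e e = 0 ∧ b f f = 0 ∧ b e f = 1 := by
      have hx1 : (0 : ℕ) < 2 * (k + 1) := by omega
      set x : M := bM ⟨0, hx1⟩ with hxdef
      obtain ⟨y, hy⟩ := hperf.2 (bM.coord ⟨0, hx1⟩)
      have hxy : b x y = 1 := by
        have := congrArg (fun φ : Module.Dual S M => φ x) hy
        simpa [LinearMap.flip_apply, Module.Basis.coord_apply, hxdef, Module.Basis.repr_self] using this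
      obtain ⟨s, hs⟩ := halt2 x
      obtain ⟨t, ht⟩ := halt2 y
      obtain ⟨ρ, hρ, hρu⟩ := exists_AS_root h2 (s * t)
      set β : S := -s * (↑hρu.unit⁻¹ : S) with hβdef
      have hβ : β * (ρ + 1) = -s := by
        have h1 : (↑hρu.unit⁻¹ : S) * (ρ + 1) = 1 := hρu.val_inv_mul
        calc β * (ρ + 1) = -s * ((↑hρu.unit⁻¹ : S) * (ρ + 1)) := by rw [hβdef]; ring
        _ = -s := by rw [h1]; ring
      have hkey : s + β + t * β * β = 0 := by
        have hcan : (ρ + 1) * ((ρ + 1) * (s + β + t * β * β)) = 0 := by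
          linear_combination ((ρ + 1) + t * β * (ρ + 1) - t * s) * hβ + s * hρ
        have h1 : (ρ + 1) * (s + β + t * β * β) = 0 := hρu.mul_right_eq_zero.mp hcan
        exact hρu.mul_right_eq_zero.mp h1
      set e : M := x + β • y with hedef
      have hyx : b y x = 1 := by rw [hsymm y x, hxy]
      have hee : b e e = 0 := by
        have : b e e = 2 * (s + β + t * β * β) := by
          simp only [hedef, map_add, map_smul, LinearMap.add_apply, LinearMap.smul_apply,
            smul_eq_mul]
          rw [hs, ht, hxy, hyx]; ring
        rw [this, hkey, mul_zero]
      have hey : b e y = 1 + 2 * (t * β) := by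
        simp only [hedef, map_add, map_smul, LinearMap.add_apply, LinearMap.smul_apply,
          smul_eq_mul]
        rw [hxy, ht]; ring
      have hw : IsUnit (b e y) := by
        rw [hey]
        exact unit_one_add (Ideal.mul_mem_right _ _ h2)
      set f₀ : M := (↑hw.unit⁻¹ : S) • y with hf₀def
      have hef₀ : b e f₀ = 1 := by
        rw [hf₀def, map_smul, smul_eq_mul]
        exact hw.val_inv_mul
      have hf₀e : b f₀ e = 1 := by rw [hsymm f₀ e, hef₀]
      set t₀ : S := t * (↑hw.unit⁻¹ : S) * (↑hw.unit⁻¹ : S) with ht₀def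
      have hff₀ : b f₀ f₀ = 2 * t₀ := by
        simp only [hf₀def, map_smul, LinearMap.smul_apply, smul_eq_mul]
        rw [ht, ht₀def]; ring
      refine ⟨e, f₀ - t₀ • e, hee, ?_, ?_⟩
      · simp only [map_sub, map_smul, LinearMap.sub_apply, LinearMap.smul_apply, smul_eq_mul]
        rw [hff₀, hef₀, hf₀e, hee]; ring
      · simp only [map_sub, map_smul, LinearMap.sub_apply, LinearMap.smul_apply, smul_eq_mul]
        rw [hef₀, hee]; ring
    have hfe : b f e = 1 := by rw [hsymm f e, hef]
    -- step 2 : splitting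
    set φe : M →ₗ[S] S := b.flip e with hφe
    set φf : M →ₗ[S] S := b.flip f with hφf
    set N : Submodule S M := LinearMap.ker φe ⊓ LinearMap.ker φf with hN
    have hmemN : ∀ m : M, m ∈ N ↔ b m e = 0 ∧ b m f = 0 := by
      intro m
      simp [hN, Submodule.mem_inf, LinearMap.mem_ker, hφe, hφf]
    set r : M →ₗ[S] M := LinearMap.id - φf.smulRight e - φe.smulRight f with hr
    have hrval : ∀ m : M, r m = m - b m f • e - b m e • f := by
      intro m
      simp [hr, hφe, hφf]
    have hrN : ∀ m : M, r m ∈ N := by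
      intro m
      rw [hmemN]
      constructor
      · rw [hrval]
        simp only [map_sub, map_smul, LinearMap.sub_apply, LinearMap.smul_apply, smul_eq_mul]
        rw [hee, hfe]; ring
      · rw [hrval]
        simp only [map_sub, map_smul, LinearMap.sub_apply, LinearMap.smul_apply, smul_eq_mul]
        rw [hef, hff]; ring
    have hrfix : ∀ m ∈ N, r m = m := by
      intro m hm
      rw [hmemN] at hm
      rw [hrval, hm.1, hm.2]
      simp
    have hre : r e = 0 := by rw [hrval, hef, hee]; simp
    have hrf : r f = 0 := by rw [hrval, hff, hfe]; simp
    have hdecomp : ∀ m : M, m = b m f • e + b m e • f + r m := by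
      intro m; rw [hrval]; abel
    set rN : M →ₗ[S] N := r.codRestrict N hrN with hrNdef
    -- module instances on N
    haveI : Module.Free S M := Module.Free.of_basis bM
    haveI : Module.Finite S M := Module.Finite.of_basis bM
    haveI : Module.Projective S N := by
      refine Module.Projective.of_split N.subtype rN ?_
      ext w
      have : r ↑w = ↑w := hrfix ↑w w.2
      simp [hrNdef, LinearMap.codRestrict_apply, this]
    haveI : Module.Finite S N := by
      haveI : IsNoetherian S M := isNoetherian_of_isNoetherianRing_of_finite S M
      infer_instance
    haveI : Module.FinitePresentation S N := Module.finitePresentation_of_projective S N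
    haveI : Module.Free S N := Module.free_of_flat_of_isLocalRing
    -- the equivalence (Fin 2 → S) × N ≃ M
    set Ga : (Fin 2 → S) →ₗ[S] M :=
      (LinearMap.proj 0).smulRight e + (LinearMap.proj 1).smulRight f with hGa
    set G : ((Fin 2 → S) × N) →ₗ[S] M := Ga.coprod N.subtype with hG
    set F : M →ₗ[S] (Fin 2 → S) × N := (LinearMap.pi ![φf, φe]).prod rN with hF
    have hGapp : ∀ (a : Fin 2 → S) (w : N), G (a, w) = a 0 • e + a 1 • f + ↑w := by
      intro a w
      simp [hG, hGa, LinearMap.coprod_apply]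
    have hGF : G.comp F = LinearMap.id := by
      ext m
      show b m f • e + b m e • f + r m = m
      exact (hdecomp m).symm
    have hFG : F.comp G = LinearMap.id := by
      apply LinearMap.ext
      rintro ⟨a, w⟩
      have hGaw := hGapp a w
      have hw := (hmemN ↑w).mp w.2
      have hbf : b (G (a, w)) f = a 0 := by
        rw [hGaw]
        simp only [map_add, map_smul, LinearMap.add_apply, LinearMap.smul_apply, smul_eq_mul]
        rw [hef, hff, hw.2]; ring
      have hbe : b (G (a, w)) e = a 1 := by
        rw [hGaw]
        simp only [map_add, map_smul, LinearMap.add_apply, LinearMap.smul_apply, smul_eq_mul]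
        rw [hee, hfe, hw.1]; ring
      have hrG : r (G (a, w)) = ↑w := by
        rw [hrval, hbf, hbe, hGaw]; abel
      simp only [LinearMap.comp_apply, LinearMap.id_apply, hF, LinearMap.prod_apply, Pi.prod]
      refine Prod.ext ?_ ?_
      · funext i
        fin_cases i
        · simpa [LinearMap.pi_apply, hφf, LinearMap.flip_apply] using hbf
        · simpa [LinearMap.pi_apply, hφe, LinearMap.flip_apply] using hbe
      · exact Subtype.ext (by simpa [hrNdef, LinearMap.codRestrict_apply] using hrG)
    set E : ((Fin 2 → S) × N) ≃ₗ[S] M := LinearEquiv.ofLinear G F hGF hFG with hE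
    -- rank computation
    have hrank : Module.finrank S N = 2 * k := by
      have h1 : Module.finrank S M = 2 * (k + 1) := by
        rw [Module.finrank_eq_card_basis bM, Fintype.card_fin]
      have h2' : Module.finrank S ((Fin 2 → S) × N) = Module.finrank S M :=
        E.finrank_eq
      rw [Module.finrank_prod, Module.finrank_fin_fun, h1] at h2'
      omega
    set BN : Module.Basis (Fin (2 * k)) S N := (Module.finBasis S N).reindex (finCongr hrank)
      with hBN
    -- restricted form
    set bN : LinearMap.BilinForm S N := b.compl₁₂ N.subtype N.subtype with hbN
    have hbNapp : ∀ u v : N, bN u v = b ↑u ↑v := by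
      intro u v; simp [hbN, LinearMap.compl₁₂_apply]
    have hNperf : Function.Bijective ⇑bN.flip := by
      constructor
      · intro v₁ v₂ hv
        have hker : ∀ v : N, bN.flip v = 0 → v = 0 := by
          intro v hv0
          have hvM : b.flip (↑v : M) = 0 := by
            apply LinearMap.ext
            intro m
            have hm := hdecomp m
            have h1 : b (r m) ↑v = 0 := by
              have := congrArg (fun φ : Module.Dual S N => φ ⟨r m, hrN m⟩) hv0
              simpa [LinearMap.flip_apply, hbNapp] using this
            have hvN := (hmemN ↑v).mp v.2
            have h2 : b e ↑v = 0 := by rw [hsymm e ↑v]; exact hvN.1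
            have h3 : b f ↑v = 0 := by rw [hsymm f ↑v]; exact hvN.2
            simp only [LinearMap.flip_apply, LinearMap.zero_apply]
            calc b m ↑v = b (b m f • e + b m e • f + r m) ↑v := by rw [← hm]
            _ = b m f * b e ↑v + b m e * b f ↑v + b (r m) ↑v := by
                simp only [map_add, map_smul, LinearMap.add_apply, LinearMap.smul_apply,
                  smul_eq_mul]
            _ = 0 := by rw [h1, h2, h3]; ring
          have : (↑v : M) = 0 := by
            apply hperf.1
            rw [hvM, map_zero]
          exact Subtype.ext this
        have : bN.flip (v₁ - v₂) = 0 := by rw [map_sub, hv, sub_self]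
        have := hker _ this
        rwa [sub_eq_zero] at this
      · intro ψ
        obtain ⟨vM, hvM⟩ := hperf.2 (ψ.comp rN)
        have hvMval : ∀ m : M, b m vM = ψ (rN m) := by
          intro m
          have := congrArg (fun φ : Module.Dual S M => φ m) hvM
          simpa [LinearMap.flip_apply] using this
        have hrNe : rN e = 0 := Subtype.ext (by simpa [hrNdef] using hre)
        have hrNf : rN f = 0 := Subtype.ext (by simpa [hrNdef] using hrf)
        have hvN : vM ∈ N := by
          rw [hmemN]
          constructor
          · rw [hsymm vM e, hvMval e, hrNe, map_zero]
          · rw [hsymm vM f, hvMval f, hrNf, map_zero]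
        refine ⟨⟨vM, hvN⟩, ?_⟩
        apply LinearMap.ext
        intro u
        have h1 : rN ↑u = u := Subtype.ext (by simpa [hrNdef] using hrfix ↑u u.2)
        show b ↑u vM = ψ u
        rw [hvMval ↑u, h1]
    have hNsymm : ∀ u v : N, bN u v = bN v u := by
      intro u v; rw [hbNapp, hbNapp, hsymm]
    have hNalt : ∀ x : N, ∃ s : S, bN x x = 2 * s := by
      intro x
      obtain ⟨s, hs⟩ := halt2 ↑x
      exact ⟨s, by rw [hbNapp]; exact hs⟩
    obtain ⟨B', hB'⟩ := ih N BN bN hNperf hNsymm hNalt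
    -- assemble the final basis
    set Bfull : Module.Basis (Fin 2 ⊕ (Fin k × Fin 2)) S M :=
      ((Pi.basisFun S (Fin 2)).prod B').map E with hBfull
    set ι : (Fin 2 ⊕ (Fin k × Fin 2)) ≃ (Fin (k + 1) × Fin 2) :=
      { toFun := Sum.elim (fun j => (0, j)) (fun p => (p.1.succ, p.2))
        invFun := fun p => Fin.cases (Sum.inl p.2) (fun i' => Sum.inr (i', p.2)) p.1
        left_inv := by rintro (j | ⟨i, j⟩) <;> simp
        right_inv := by
          rintro ⟨i, j⟩
          refine Fin.cases ?_ (fun i' => ?_) i <;> simp } with hι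
    have hEapp : ∀ (a : Fin 2 → S) (w : N), E (a, w) = a 0 • e + a 1 • f + ↑w := by
      intro a w
      rw [hE, LinearEquiv.ofLinear_apply, hGapp]
    have hB0 : ∀ j : Fin 2, Bfull (Sum.inl j) = (Pi.single j 1 : Fin 2 → S) 0 • e +
        (Pi.single j 1 : Fin 2 → S) 1 • f := by
      intro j
      rw [hBfull, Module.Basis.map_apply, Module.Basis.prod_apply]
      simp only [Sum.elim_inl, Function.comp_apply, LinearMap.coe_inl]
      rw [Pi.basisFun_apply, hEapp]
      simp
    have hB00 : Bfull (Sum.inl 0) = e := by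
      rw [hB0]
      simp [Pi.single_eq_same, Pi.single_eq_of_ne (show (1 : Fin 2) ≠ 0 by decide)]
    have hB01 : Bfull (Sum.inl 1) = f := by
      rw [hB0]
      simp [Pi.single_eq_same, Pi.single_eq_of_ne (show (0 : Fin 2) ≠ 1 by decide)]
    have hBs : ∀ p : Fin k × Fin 2, Bfull (Sum.inr p) = ↑(B' p) := by
      intro p
      rw [hBfull, Module.Basis.map_apply, Module.Basis.prod_apply]
      simp only [Sum.elim_inr, Function.comp_apply, LinearMap.coe_inr]
      rw [hEapp]
      simp
    refine ⟨Bfull.reindex ι, ?_⟩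
    rintro ⟨i, a⟩ ⟨j, c⟩
    have hval : ∀ (i : Fin (k + 1)) (a : Fin 2),
        (Bfull.reindex ι) (i, a) = Bfull (ι.symm (i, a)) := by
      intro i a; rw [Module.Basis.reindex_apply]
    have hsymmι : ∀ (i : Fin (k + 1)) (a : Fin 2),
        ι.symm (i, a) = Fin.cases (Sum.inl a) (fun i' => Sum.inr (i', a)) i := by
      intro i a; rfl
    rw [hval, hval, hsymmι, hsymmι]
    have hB0orth : ∀ (a : Fin 2) (w : N),
        b (Bfull (Sum.inl a)) ↑w = 0 ∧ b (↑w : M) (Bfull (Sum.inl a)) = 0 := by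
      intro a w
      have hm := (hmemN ↑w).mp w.2
      have hew : b e ↑w = 0 := by rw [hsymm e ↑w]; exact hm.1
      have hfw : b f ↑w = 0 := by rw [hsymm f ↑w]; exact hm.2
      rw [hB0 a]
      constructor
      · simp only [map_add, map_smul, LinearMap.add_apply, LinearMap.smul_apply, smul_eq_mul]
        rw [hew, hfw]; ring
      · simp only [map_add, map_smul, smul_eq_mul]
        rw [hm.1, hm.2]; ring
    refine Fin.cases ?_ (fun i' => ?_) i <;> refine Fin.cases ?_ (fun j' => ?_) j
    · -- both zero
      simp only [Fin.cases_zero]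
      rw [hB0 a, hB0 c]
      simp only [map_add, map_smul, LinearMap.add_apply, LinearMap.smul_apply, smul_eq_mul]
      rw [hee, hef, hfe, hff]
      fin_cases a <;> fin_cases c <;> simp [Pi.single_apply]
    · -- i = 0, j = succ
      simp only [Fin.cases_zero, Fin.cases_succ]
      rw [hBs, (hB0orth a (B' (j', c))).1]
      have hne : ¬((0 : Fin (k + 1)) = j'.succ ∧ a ≠ c) := by
        rintro ⟨h, -⟩; exact (Fin.succ_ne_zero j') h.symm
      rw [if_neg hne]
    · -- i = succ, j = 0
      simp only [Fin.cases_zero, Fin.cases_succ]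
      rw [hBs, (hB0orth c (B' (i', a))).2]
      have hne : ¬(i'.succ = (0 : Fin (k + 1)) ∧ a ≠ c) := by
        rintro ⟨h, -⟩; exact (Fin.succ_ne_zero i') h
      rw [if_neg hne]
    · -- both succ
      simp only [Fin.cases_succ]
      rw [hBs, hBs, ← hbNapp, hB' (i', a) (j', c)]
      have hiff : (i'.succ = j'.succ ∧ a ≠ c) ↔ (i' = j' ∧ a ≠ c) := by
        rw [Fin.succ_inj]
      simp only [hiff]

/-- Proposition 3.4 (a): over a 2-adically complete Noetherian strictly henselian local
ring `S`, a perfect symmetric bilinear form on a free module of rank `2n` whose reduction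
modulo 2 is alternating admits a symplectic-like basis with Gram matrix `J(2n)`. -/
theorem stmt_0 (S : Type*) [CommRing S] [IsLocalRing S] [IsNoetherianRing S]
    [IsAdicComplete (Ideal.span {(2 : S)}) S] [HenselianLocalRing S]
    [IsSepClosed (IsLocalRing.ResidueField S)]
    (n : ℕ) (M : Type*) [AddCommGroup M] [Module S M]
    (bM : Module.Basis (Fin (2 * n)) S M)
    (b : LinearMap.BilinForm S M)
    (hperf : Function.Bijective ⇑b.flip)
    (hsymm : ∀ u v : M, b u v = b v u)
    (halt2 : ∀ x : M, ∃ s : S, b x x = 2 * s) :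
    ∃ B : Module.Basis (Fin n × Fin 2) S M,
      ∀ i j : Fin n × Fin 2,
        b (B i) (B j) = if i.1 = j.1 ∧ i.2 ≠ j.2 then 1 else 0 := by
  rcases subsingleton_or_nontrivial S with hS | hS
  · refine ⟨bM.reindex ((finCongr (mul_comm 2 n)).trans finProdFinEquiv.symm), ?_⟩
    intro i j
    exact Subsingleton.elim _ _
  · exact aux_sympl S (two_mem_max S) n M bM b hperf hsymm halt2
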